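/- Let Z be a proper metric space that contains no line, let k ≥ 0, and equip X = ℝ^k × Z with the ℓ²-product metric (ℝ^k carrying the standard Euclidean metric). Let Γ be a group acting on X by isometries that preserve the product splitting, so that each γ ∈ Γ acts as γ·(v, w) = (γ₁·v, γ₂·w) with γ₁ ∈ Isom(ℝ^k) and γ₂ ∈ Isom(Z). Fix z ∈ Z and set x̃ = (0, z). Suppose there is R > 0 such that for every γ ∈ Γ there exists a minimizing geodesic from x̃ to γ·x̃ every point of which lies within distance R of the orbit Γ·x̃. Then the set { γ₂·z : γ ∈ Γ } is bounded in Z. -/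

import Mathlib

/-- A minimizing geodesic from `p` to `q` in a metric space: an isometric embedding of
`[0, dist p q]` sending `0` to `p` and `dist p q` to `q`. -/
def IsMinGeodesic {X : Type*} [MetricSpace X] (c : ℝ → X) (p q : X) : Prop :=
  c 0 = p ∧ c (dist p q) = q ∧
    ∀ s ∈ Set.Icc (0 : ℝ) (dist p q), ∀ t ∈ Set.Icc (0 : ℝ) (dist p q),
      dist (c s) (c t) = |s - t|

open Filter Set Metric

section Aux

variable {α β : Type*} [MetricSpace α] [MetricSpace β]

lemma l2_dist_eq (f g : WithLp 2 (α × β)) :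
    dist f g = Real.sqrt (dist f.fst g.fst ^ 2 + dist f.snd g.snd ^ 2) := by
  have h2 : (2 : ENNReal).toReal = 2 := by norm_num
  rw [WithLp.prod_dist_eq_add (by rw [h2]; norm_num), h2, Real.sqrt_eq_rpow]
  norm_cast

lemma l2_dist_sq (f g : WithLp 2 (α × β)) :
    dist f.fst g.fst ^ 2 + dist f.snd g.snd ^ 2 = dist f g ^ 2 := by
  rw [l2_dist_eq, Real.sq_sqrt (by positivity)]

lemma snd_dist_le (f g : WithLp 2 (α × β)) : dist f.snd g.snd ≤ dist f g := by
  have h : dist f.snd g.snd ^ 2 ≤ dist f.fst g.fst ^ 2 + dist f.snd g.snd ^ 2 := by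
    nlinarith [sq_nonneg (dist f.fst g.fst)]
  have h2 := Real.sqrt_le_sqrt h
  rw [Real.sqrt_sq dist_nonneg] at h2
  rw [l2_dist_eq]
  exact h2

lemma minkowski_arith {A B A' B' M L t D : ℝ}
    (hA0 : 0 ≤ A) (hB0 : 0 ≤ B) (hA'0 : 0 ≤ A') (hB'0 : 0 ≤ B')
    (hM0 : 0 ≤ M) (hL0 : 0 ≤ L) (ht0 : 0 ≤ t) (htD : t ≤ D)
    (f1 : A ^ 2 + B ^ 2 = t ^ 2) (f2 : A' ^ 2 + B' ^ 2 = (D - t) ^ 2)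
    (f3 : M ^ 2 + L ^ 2 = D ^ 2) (tri1 : M ≤ A + A') (tri2 : L ≤ B + B') :
    B * D = L * t ∧ B' * D = L * (D - t) := by
  have hS0 : 0 ≤ A * A' + B * B' :=
    add_nonneg (mul_nonneg hA0 hA'0) (mul_nonneg hB0 hB'0)
  have hT0 : 0 ≤ t * (D - t) := mul_nonneg ht0 (sub_nonneg.mpr htD)
  have hprod : t ^ 2 * (D - t) ^ 2 = (A ^ 2 + B ^ 2) * (A' ^ 2 + B' ^ 2) := by
    rw [f1, f2]
  have hdiff : (t * (D - t)) ^ 2 - (A * A' + B * B') ^ 2 = (A * B' - A' * B) ^ 2 := by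
    linear_combination hprod
  have hT2 : (A * A' + B * B') ^ 2 ≤ (t * (D - t)) ^ 2 := by
    have := sq_nonneg (A * B' - A' * B); linarith
  have key1 : A * A' + B * B' ≤ t * (D - t) :=
    (pow_le_pow_iff_left₀ hS0 hT0 two_ne_zero).mp hT2
  have e1 : (A + A') ^ 2 + (B + B') ^ 2
      = t ^ 2 + (D - t) ^ 2 + 2 * (A * A' + B * B') := by
    linear_combination f1 + f2
  have e2 : D ^ 2 = t ^ 2 + (D - t) ^ 2 + 2 * (t * (D - t)) := by ring
  have key2 : (A + A') ^ 2 + (B + B') ^ 2 ≤ D ^ 2 := by linarith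
  have hM2 : M ^ 2 ≤ (A + A') ^ 2 := pow_le_pow_left₀ hM0 tri1 2
  have hL2 : L ^ 2 ≤ (B + B') ^ 2 := pow_le_pow_left₀ hL0 tri2 2
  have hBB'2 : (B + B') ^ 2 ≤ L ^ 2 := by linarith
  have hAA'2 : (A + A') ^ 2 ≤ M ^ 2 := by linarith
  have key3 : L = B + B' :=
    le_antisymm tri2 ((pow_le_pow_iff_left₀ (add_nonneg hB0 hB'0) hL0 two_ne_zero).mp hBB'2)
  have key3' : M = A + A' :=
    le_antisymm tri1 ((pow_le_pow_iff_left₀ (add_nonneg hA0 hA'0) hM0 two_ne_zero).mp hAA'2)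
  have f3' : (A + A') ^ 2 + (B + B') ^ 2 = D ^ 2 := by rw [← key3, ← key3']; exact f3
  have hS : A * A' + B * B' = t * (D - t) := by
    linear_combination (1/2 : ℝ) * f3' - (1/2 : ℝ) * f1 - (1/2 : ℝ) * f2
  have key5 : A * B' = A' * B := by
    have hz : (A * B' - A' * B) ^ 2 = 0 := by
      linear_combination (A' ^ 2 + B' ^ 2) * f1 + t ^ 2 * f2
        - (A * A' + B * B' + t * (D - t)) * hS
    have := pow_eq_zero_iff (n := 2) (by norm_num) |>.mp hz
    linarith [sub_eq_zero.mp this]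
  have key6 : B * (D - t) = B' * t := by
    have hsq : (B * (D - t)) ^ 2 = (B' * t) ^ 2 := by
      linear_combination B' ^ 2 * f1 - B ^ 2 * f2 - (A * B' + A' * B) * key5
    have h1 : 0 ≤ B * (D - t) := mul_nonneg hB0 (sub_nonneg.mpr htD)
    have h2 : 0 ≤ B' * t := mul_nonneg hB'0 ht0
    exact (sq_eq_sq₀ h1 h2).mp hsq
  constructor
  · linear_combination key6 - t * key3
  · linear_combination -key6 - (D - t) * key3

/-- Three-point lemma: the second-coordinate distance along a minimizing geodesic
is proportional to the parameter. -/
lemma threePoint (c : ℝ → WithLp 2 (α × β)) (p q : WithLp 2 (α × β))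
    (h : IsMinGeodesic c p q) {t : ℝ} (ht : t ∈ Set.Icc (0:ℝ) (dist p q)) :
    dist (c 0).snd (c t).snd * dist p q = dist p.snd q.snd * t ∧
    dist (c t).snd (c (dist p q)).snd * dist p q = dist p.snd q.snd * (dist p q - t) := by
  obtain ⟨h0, hDq, hIcc⟩ := h
  have hD0 : (0:ℝ) ≤ dist p q := dist_nonneg
  have hDmem : dist p q ∈ Set.Icc (0:ℝ) (dist p q) := ⟨hD0, le_refl _⟩
  have h0mem : (0:ℝ) ∈ Set.Icc (0:ℝ) (dist p q) := ⟨le_refl _, hD0⟩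
  have hend : ∀ s ∈ Set.Icc (0:ℝ) (dist p q), ∀ u ∈ Set.Icc (0:ℝ) (dist p q),
      dist (c s).fst (c u).fst ^ 2 + dist (c s).snd (c u).snd ^ 2 = (s - u) ^ 2 := by
    intro s hs u hu
    have h1 := hIcc s hs u hu
    have h2 : dist (c s) (c u) ^ 2 = (s - u) ^ 2 := by rw [h1, sq_abs]
    rw [l2_dist_sq, h2]
  have f1 : dist (c 0).fst (c t).fst ^ 2 + dist (c 0).snd (c t).snd ^ 2 = t ^ 2 := by
    have h1 := hend 0 h0mem t ht
    have e : ((0:ℝ) - t) ^ 2 = t ^ 2 := by ring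
    rw [e] at h1; exact h1
  have f2 : dist (c t).fst (c (dist p q)).fst ^ 2
      + dist (c t).snd (c (dist p q)).snd ^ 2 = (dist p q - t) ^ 2 := by
    have h1 := hend t ht (dist p q) hDmem
    have e : (t - dist p q) ^ 2 = (dist p q - t) ^ 2 := by ring
    rw [e] at h1; exact h1
  have f3 : dist (c 0).fst (c (dist p q)).fst ^ 2
      + dist (c 0).snd (c (dist p q)).snd ^ 2 = dist p q ^ 2 := by
    have h1 := hend 0 h0mem (dist p q) hDmem
    have e : ((0:ℝ) - dist p q) ^ 2 = dist p q ^ 2 := by ring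
    rw [e] at h1; exact h1
  have tri1 : dist (c 0).fst (c (dist p q)).fst
      ≤ dist (c 0).fst (c t).fst + dist (c t).fst (c (dist p q)).fst :=
    dist_triangle _ _ _
  have tri2 : dist (c 0).snd (c (dist p q)).snd
      ≤ dist (c 0).snd (c t).snd + dist (c t).snd (c (dist p q)).snd :=
    dist_triangle _ _ _
  have hpq : dist p.snd q.snd = dist (c 0).snd (c (dist p q)).snd := by rw [h0, hDq]
  rw [hpq]
  exact minkowski_arith dist_nonneg dist_nonneg dist_nonneg dist_nonneg dist_nonneg
    dist_nonneg ht.1 ht.2 f1 f2 f3 tri1 tri2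

lemma geo_snd_le (c : ℝ → WithLp 2 (α × β)) (p q : WithLp 2 (α × β))
    (h : IsMinGeodesic c p q) {s t : ℝ} (hst : s ≤ t)
    (hs : s ∈ Set.Icc (0:ℝ) (dist p q)) (ht : t ∈ Set.Icc (0:ℝ) (dist p q)) :
    dist (c s).snd (c t).snd * dist p q = dist p.snd q.snd * (t - s) := by
  set D := dist p q with hD
  have hD0 : (0:ℝ) ≤ D := dist_nonneg
  rcases eq_or_lt_of_le hs.2 with hsD | hsD
  · -- s = D, so t = D
    have hts : t = s := le_antisymm (hsD ▸ ht.2) hst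
    subst hts
    simp [dist_self]
  · -- s < D
    have hd : dist (c s) q = D - s := by
      rw [← h.2.1]
      rw [h.2.2 s hs D ⟨hD0, le_refl _⟩]
      rw [abs_of_nonpos (by linarith [hs.2])]; ring
    have h' : IsMinGeodesic (fun u => c (u + s)) (c s) q := by
      refine ⟨by simp, ?_, ?_⟩
      · show c (dist (c s) q + s) = q
        rw [hd]
        have he : D - s + s = D := by ring
        rw [he]; exact h.2.1
      · intro u hu u' hu'
        rw [hd] at hu hu'
        have := h.2.2 (u + s) ⟨by linarith [hu.1, hs.1], by linarith [hu.2]⟩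
          (u' + s) ⟨by linarith [hu'.1, hs.1], by linarith [hu'.2]⟩
        rw [this]; ring_nf
    have hts : t - s ∈ Set.Icc (0:ℝ) (dist (c s) q) := by
      rw [hd]; exact ⟨by linarith, by linarith [ht.2]⟩
    have G1 := (threePoint _ _ _ h' hts).1
    simp only [zero_add, sub_add_cancel] at G1
    rw [hd] at G1
    have hsIcc : s ∈ Set.Icc (0:ℝ) D := hs
    have G2 := (threePoint c p q h hsIcc).2
    rw [h.2.1] at G2
    -- G1 : dist (c s).snd (c t).snd * (D - s) = dist (c s).snd q.snd * (t - s)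
    -- G2 : dist (c s).snd q.snd * D = dist p.snd q.snd * (D - s)
    have hne : D - s ≠ 0 := by linarith
    have hcomb : dist (c s).snd (c t).snd * D * (D - s)
        = dist p.snd q.snd * (t - s) * (D - s) := by
      linear_combination D * G1 + (t - s) * G2
    exact mul_right_cancel₀ hne hcomb

lemma geo_snd (c : ℝ → WithLp 2 (α × β)) (p q : WithLp 2 (α × β))
    (h : IsMinGeodesic c p q) {s t : ℝ}
    (hs : s ∈ Set.Icc (0:ℝ) (dist p q)) (ht : t ∈ Set.Icc (0:ℝ) (dist p q)) :
    dist (c s).snd (c t).snd * dist p q = dist p.snd q.snd * |s - t| := by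
  rcases le_total s t with hst | hst
  · rw [abs_of_nonpos (by linarith), neg_sub]; exact geo_snd_le c p q h hst hs ht
  · rw [abs_of_nonneg (by linarith), dist_comm]
    have := geo_snd_le c p q h hst ht hs
    linarith [this]

lemma abs_min_sub_min_le_abs' (a b c : ℝ) : |min a c - min b c| ≤ |a - b| := by
  simpa [max_eq_left (abs_nonneg (a - b))] using abs_min_sub_min_le_max a c b c

lemma clamp_lip (a b c : ℝ) : |min (max a 0) c - min (max b 0) c| ≤ |a - b| :=
  le_trans (abs_min_sub_min_le_abs' _ _ _) (abs_max_sub_max_le_abs a b 0)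

end Aux

/-- Let `Z` be a proper metric space containing no line, and let `Γ` act by isometries on the
ℓ²-product `X = ℝᵏ × Z` preserving the splitting, `γ · (v, w) = (γ₁ v, γ₂ w)`. If, with
`x̃ = (0, z)`, every minimal geodesic from `x̃` to `γ · x̃` (for a suitable choice) stays within
distance `R` of the orbit `Γ · x̃`, then `{γ₂ · z : γ ∈ Γ}` is bounded in `Z`. -/
theorem stmt_9 (k : ℕ) {Z : Type*} [MetricSpace Z] [ProperSpace Z]
    (hnoline : ¬ ∃ ℓ : ℝ → Z, Isometry ℓ)
    {Γ : Type*} [Group Γ] [MulAction Γ (WithLp 2 (EuclideanSpace ℝ (Fin k) × Z))]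
    (hiso : ∀ γ : Γ, Isometry (fun p : WithLp 2 (EuclideanSpace ℝ (Fin k) × Z) => γ • p))
    (a : Γ → (EuclideanSpace ℝ (Fin k) ≃ᵢ EuclideanSpace ℝ (Fin k)))
    (b : Γ → (Z ≃ᵢ Z))
    (hsplit : ∀ (γ : Γ) (v : EuclideanSpace ℝ (Fin k)) (w : Z),
      γ • (WithLp.equiv 2 (EuclideanSpace ℝ (Fin k) × Z)).symm (v, w) =
        (WithLp.equiv 2 (EuclideanSpace ℝ (Fin k) × Z)).symm (a γ v, b γ w))
    (z : Z) (x : WithLp 2 (EuclideanSpace ℝ (Fin k) × Z))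
    (hx : x = (WithLp.equiv 2 (EuclideanSpace ℝ (Fin k) × Z)).symm (0, z))
    (R : ℝ) (hR : 0 < R)
    (hmin : ∀ γ : Γ, ∃ c : ℝ → WithLp 2 (EuclideanSpace ℝ (Fin k) × Z),
      IsMinGeodesic c x (γ • x) ∧
      ∀ t ∈ Set.Icc (0 : ℝ) (dist x (γ • x)),
        Metric.infDist (c t) (MulAction.orbit Γ x) ≤ R) :
    Bornology.IsBounded (Set.range fun γ : Γ => b γ z) := by
  classical
  by_contra hB
  rw [Metric.isBounded_iff_subset_closedBall z] at hB
  push_neg at hB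
  have H : ∀ n : ℕ, ∃ γ : Γ, (n : ℝ) < dist z (b γ z) := by
    intro n
    obtain ⟨w, hw1, hw2⟩ := Set.not_subset.mp (hB n)
    obtain ⟨γ, rfl⟩ := hw1
    refine ⟨γ, ?_⟩
    rw [dist_comm]
    simpa [Metric.mem_closedBall] using hw2
  choose γ hγ using H
  choose c hgeo hnear using fun n => hmin (γ n)
  obtain ⟨D, hD⟩ : ∃ D : ℕ → ℝ, ∀ n, D n = dist x (γ n • x) := ⟨_, fun n => rfl⟩
  obtain ⟨L, hL⟩ : ∃ L : ℕ → ℝ, ∀ n, L n = dist z (b (γ n) z) := ⟨_, fun n => rfl⟩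
  have hxsnd : (x : WithLp 2 (EuclideanSpace ℝ (Fin k) × Z)).snd = z := by rw [hx]; rfl
  have hgxsnd : ∀ n, ((γ n : Γ) • x).snd = b (γ n) z := by
    intro n; rw [hx, hsplit (γ n) 0 z]; rfl
  have hL0 : ∀ n, 0 < L n := fun n =>
    lt_of_le_of_lt (Nat.cast_nonneg n) (by rw [hL]; exact hγ n)
  have hLD : ∀ n, L n ≤ D n := by
    intro n
    have h := snd_dist_le x ((γ n : Γ) • x)
    rw [hxsnd, hgxsnd n] at h
    rw [hL, hD]
    exact h
  have hD0 : ∀ n, 0 < D n := fun n => lt_of_lt_of_le (hL0 n) (hLD n)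
  -- choose points on the orbit near the midpoints
  have hmid : ∀ n, ∃ β : Γ, dist (c n (D n / 2)) ((β : Γ) • x) < R + 1 := by
    intro n
    have hmem : D n / 2 ∈ Set.Icc (0:ℝ) (dist x (γ n • x)) := by
      rw [← hD]
      exact ⟨by linarith [hD0 n], by linarith [hD0 n]⟩
    have h1 : Metric.infDist (c n (D n / 2)) (MulAction.orbit Γ x) < R + 1 :=
      lt_of_le_of_lt (hnear n _ hmem) (by linarith)
    have hne : (MulAction.orbit Γ x).Nonempty := ⟨x, MulAction.mem_orbit_self x⟩
    obtain ⟨y, hy, hdy⟩ := (Metric.infDist_lt_iff hne).mp h1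
    obtain ⟨β, hb2⟩ := MulAction.mem_orbit_iff.mp hy
    rw [← hb2] at hdy
    exact ⟨β, hdy⟩
  choose β hβ using hmid
  obtain ⟨cl, hcl⟩ : ∃ cl : ℕ → ℝ → ℝ,
      ∀ n s, cl n s = min (max (s + L n / 2) 0) (L n) := ⟨_, fun n s => rfl⟩
  obtain ⟨τ, hτ⟩ : ∃ τ : ℕ → ℝ → Z,
      ∀ n s, τ n s = (b (β n)).symm ((c n (cl n s * (D n / L n))).snd) := ⟨_, fun n s => rfl⟩
  have hcl0 : ∀ n s, 0 ≤ cl n s := fun n s => by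
    rw [hcl]; exact le_min (le_max_right _ _) (hL0 n).le
  have hclL : ∀ n s, cl n s ≤ L n := fun n s => by rw [hcl]; exact min_le_right _ _
  have hparam : ∀ n s, cl n s * (D n / L n) ∈ Set.Icc (0:ℝ) (dist x (γ n • x)) := by
    intro n s
    rw [← hD]
    constructor
    · exact mul_nonneg (hcl0 n s) (div_nonneg (hD0 n).le (hL0 n).le)
    · have h1 : cl n s * (D n / L n) ≤ L n * (D n / L n) :=
        mul_le_mul_of_nonneg_right (hclL n s) (div_nonneg (hD0 n).le (hL0 n).le)
      have h2 : L n * (D n / L n) = D n := by field_simp [(hL0 n).ne']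
      linarith
  -- the rescaled translated curves are isometric on the clamped parameters
  have hτd : ∀ n s t, dist (τ n s) (τ n t) = |cl n s - cl n t| := by
    intro n s t
    rw [hτ, hτ, IsometryEquiv.dist_eq]
    have hg := geo_snd (c n) x (γ n • x) (hgeo n) (hparam n s) (hparam n t)
    rw [hxsnd, hgxsnd n, ← hL n, ← hD n] at hg
    have habs : |cl n s * (D n / L n) - cl n t * (D n / L n)|
        = |cl n s - cl n t| * (D n / L n) := by
      rw [← sub_mul, abs_mul, abs_of_nonneg (div_nonneg (hD0 n).le (hL0 n).le)]
    rw [habs] at hg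
    have hrh : L n * (|cl n s - cl n t| * (D n / L n)) = |cl n s - cl n t| * D n := by
      field_simp [(hL0 n).ne']
    rw [hrh] at hg
    exact mul_right_cancel₀ (hD0 n).ne' hg
  have hcl0eq : ∀ n, cl n 0 = L n / 2 := by
    intro n
    rw [hcl, zero_add, max_eq_left (by linarith [hL0 n]), min_eq_left (by linarith [hL0 n])]
  have hmidparam : ∀ n, cl n 0 * (D n / L n) = D n / 2 := by
    intro n
    rw [hcl0eq n]
    field_simp [(hL0 n).ne']
  have hτ0 : ∀ n, dist (τ n 0) z < R + 1 := by
    intro n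
    rw [hτ, hmidparam n]
    have hzz : dist ((b (β n)).symm ((c n (D n / 2)).snd)) z
        = dist ((c n (D n / 2)).snd) (b (β n) z) := by
      conv_lhs => rw [show z = (b (β n)).symm (b (β n) z) from
        (IsometryEquiv.symm_apply_apply _ _).symm]
      exact IsometryEquiv.dist_eq _ _ _
    rw [hzz]
    have h := snd_dist_le (c n (D n / 2)) ((β n : Γ) • x)
    have hb2 : ((β n : Γ) • x).snd = b (β n) z := by rw [hx, hsplit (β n) 0 z]; rfl
    rw [hb2] at h
    exact lt_of_le_of_lt h (hβ n)
  have hbound : ∀ n s, dist (τ n s) z ≤ |s| + (R + 1) := by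
    intro n s
    have h1 : dist (τ n s) (τ n 0) = |cl n s - cl n 0| := hτd n s 0
    have h2 : |cl n s - cl n 0| ≤ |s| := by
      rw [hcl, hcl]
      have h3 := clamp_lip (s + L n / 2) (L n / 2) (L n)
      have e : (s + L n / 2) - (L n / 2) = s := by ring
      rw [e] at h3
      rw [zero_add]
      exact h3
    calc dist (τ n s) z ≤ dist (τ n s) (τ n 0) + dist (τ n 0) z := dist_triangle _ _ _
      _ ≤ |s| + (R + 1) := add_le_add (h1 ▸ h2) (hτ0 n).le
  have hexact : ∀ (s t : ℝ) (n : ℕ), |s| ≤ L n / 2 → |t| ≤ L n / 2 →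
      dist (τ n s) (τ n t) = |s - t| := by
    intro s t n hs ht
    have e : ∀ u : ℝ, |u| ≤ L n / 2 → cl n u = u + L n / 2 := by
      intro u hu
      obtain ⟨hu1, hu2⟩ := abs_le.mp hu
      rw [hcl, max_eq_left (by linarith), min_eq_left (by linarith)]
    rw [hτd n s t, e s hs, e t ht]
    have e2 : s + L n / 2 - (t + L n / 2) = s - t := by ring
    rw [e2]
  -- take an ultrafilter limit to produce a line in Z
  let U : Ultrafilter ℕ := Ultrafilter.of Filter.atTop
  have hU : (U : Filter ℕ) ≤ Filter.atTop := Ultrafilter.of_le _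
  have hlim : ∀ t : ℝ, ∃ w : Z, Filter.Tendsto (fun n => τ n t) U (nhds w) := by
    intro t
    have hcpt : IsCompact (Metric.closedBall z (|t| + (R + 1))) := isCompact_closedBall _ _
    have hle : (Ultrafilter.map (fun n => τ n t) U : Filter Z)
        ≤ Filter.principal (Metric.closedBall z (|t| + (R + 1))) := by
      rw [Ultrafilter.coe_map, Filter.le_principal_iff, Filter.mem_map]
      exact Filter.univ_mem' fun n => Metric.mem_closedBall.mpr (hbound n t)
    obtain ⟨w, _, hw⟩ := hcpt.ultrafilter_le_nhds _ hle
    rw [Ultrafilter.coe_map] at hw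
    exact ⟨w, hw⟩
  choose ℓ hℓ using hlim
  have hiso2 : ∀ s t : ℝ, dist (ℓ s) (ℓ t) = |s - t| := by
    intro s t
    have h1 : Filter.Tendsto (fun n => dist (τ n s) (τ n t)) U (nhds (dist (ℓ s) (ℓ t))) :=
      (hℓ s).dist (hℓ t)
    have h2 : ∀ᶠ n in (U : Filter ℕ), dist (τ n s) (τ n t) = |s - t| := by
      apply Filter.Eventually.filter_mono hU
      rw [Filter.eventually_atTop]
      refine ⟨⌈2 * |s| + 2 * |t|⌉₊, fun n hn => ?_⟩
      have hn' : 2 * |s| + 2 * |t| ≤ (n : ℝ) :=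
        le_trans (Nat.le_ceil _) (Nat.cast_le.mpr hn)
      have hLn : (n : ℝ) < L n := by rw [hL]; exact hγ n
      exact hexact s t n (by linarith [abs_nonneg s, abs_nonneg t])
        (by linarith [abs_nonneg s, abs_nonneg t])
    have h3 : Filter.Tendsto (fun n => dist (τ n s) (τ n t)) U (nhds (|s - t|)) :=
      Filter.Tendsto.congr' (Filter.EventuallyEq.symm h2) tendsto_const_nhds
    exact tendsto_nhds_unique h1 h3
  exact hnoline ⟨ℓ, Isometry.of_dist_eq fun s t => by rw [hiso2 s t, Real.dist_eq]⟩
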